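/- For the acceptance probability α(x,y) = min{1, (p(x,y)/(1-p(x,y))) · (q(y,x)/q(x,y))} with p(x,y) ∈ (0,1) satisfying p(x,y) + p(y,x) = 1, the resulting transition kernel P(x,y) = q(x,y)α(x,y) for x ≠ y need not be reversible: there exist a three-state example of p and symmetric q for which π(x)P(x,y) ≠ π(y)P(y,x) for the stationary distribution π of P. -/

import Mathlib

open Finset

/-- The MCMC-BO acceptance probability built from pairwise winning probabilities `p`. -/
noncomputable def mcmcAccept (p q : Fin 3 → Fin 3 → ℝ) (x y : Fin 3) : ℝ :=
  min 1 (p x y * q y x / (p y x * q x y))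

/-- The MCMC-BO transition kernel: off-diagonal moves are proposed by `q` and accepted
with probability `mcmcAccept`, and the diagonal absorbs the remaining mass. -/
noncomputable def mcmcKernel (p q : Fin 3 → Fin 3 → ℝ) (x y : Fin 3) : ℝ :=
  if x = y then 1 - ∑ z ∈ Finset.univ.erase x, q x z * mcmcAccept p q x z
  else q x y * mcmcAccept p q x y

/-- Winning probabilities for the counterexample: a "cyclic" preference pattern. -/
noncomputable def pEx : Fin 3 → Fin 3 → ℝ :=
  !![1/2, 2/3, 1/3; 1/3, 1/2, 2/3; 2/3, 1/3, 1/2]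

/-- Explicit computation of the MCMC-BO kernel for `pEx` and uniform proposal `1/3`. -/
lemma hK_pEx : ∀ x y, mcmcKernel pEx (fun _ _ => 1/3) x y =
    !![1/2, 1/3, 1/6; 1/6, 1/2, 1/3; 1/3, 1/6, 1/2] x y := by
  intro x y
  fin_cases x <;> fin_cases y <;>
    norm_num [mcmcKernel, mcmcAccept, Finset.sum_erase_eq_sub (Finset.mem_univ _),
      Fin.sum_univ_three, pEx, min_def] <;> simp <;> norm_num

/-- The transition kernel induced by the acceptance probability
`α(x,y) = min{1, (p(x,y)/(1-p(x,y)))·(q(y,x)/q(x,y))}` need not be reversible: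
there is a three-state example with symmetric proposal `q` and winning probabilities
`p` for which detailed balance fails for the stationary distribution of the kernel. -/
theorem stmt_6 :
    ∃ (p q : Fin 3 → Fin 3 → ℝ),
      (∀ x y, 0 < q x y) ∧ (∀ x y, q x y = q y x) ∧
      (∀ x y, x ≠ y → p x y ∈ Set.Ioo (0 : ℝ) 1 ∧ p x y + p y x = 1) ∧
      ∃ π' : Fin 3 → ℝ,
        (∀ x, 0 ≤ π' x) ∧ (∑ x, π' x = 1) ∧
        (∀ y, ∑ x, π' x * mcmcKernel p q x y = π' y) ∧
        ∃ x y, π' x * mcmcKernel p q x y ≠ π' y * mcmcKernel p q y x := by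
  refine ⟨pEx, fun _ _ => 1/3, fun x y => by norm_num, fun x y => rfl, ?_, fun _ => 1/3,
    fun x => by norm_num, by norm_num [Fin.sum_univ_three], ?_, 0, 1, ?_⟩
  · intro x y hxy
    fin_cases x <;> fin_cases y <;> simp_all [pEx] <;> norm_num
  · intro y
    simp only [Fin.sum_univ_three, hK_pEx]
    fin_cases y <;> norm_num <;> simp <;> norm_num
  · rw [hK_pEx, hK_pEx]; norm_num
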